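/- arXiv:1612.06281 — 3 statements merged into one kernel-verified Lean document; each statement's English description precedes it below -/
import Mathlib

section
/- Let μ be a probability measure on T^p, and let γ₀, γ₁ ∈ D_μ coincide for all x outside a Borel set E ⊂ T^p. Then the 1-Wasserstein distance satisfies d₁(μ∗γ₀, μ∗γ₁) ≤ √p · ∫_{E×ℝ^p} |γ₀(x,v) − γ₁(x,v)| dμ(x) dv. -/
open MeasureTheory Real
open scoped NNReal ENNReal

noncomputable section

/-- Projection `ℝ^p → T^p`. -/
def projT {p : ℕ} (v : EuclideanSpace ℝ (Fin p)) : Fin p → AddCircle (1 : ℝ) :=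
  fun i => (v i : AddCircle (1 : ℝ))

/-- The jump convolution `μ∗γ`. -/
def convM {p : ℕ} (μ : Measure (Fin p → AddCircle (1 : ℝ)))
    (γ : (Fin p → AddCircle (1 : ℝ)) × EuclideanSpace ℝ (Fin p) → ℝ) :
    Measure (Fin p → AddCircle (1 : ℝ)) :=
  Measure.map (fun z => z.1 - projT z.2)
    ((μ.prod volume).withDensity fun z => ENNReal.ofReal (γ z))

/-- The quotient Euclidean distance `|x−y|_{T^p}` on the torus. -/
def torusDist {p : ℕ} (x y : Fin p → AddCircle (1 : ℝ)) : ℝ :=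
  Real.sqrt (∑ i, dist (x i) (y i) ^ 2)

/-- The 1-Wasserstein distance via Kantorovich duality:
`d₁(μ,ν) = sup { ∫f dμ − ∫f dν : f 1-Lipschitz for the torus metric }`. -/
def W1 {p : ℕ} (μ ν : Measure (Fin p → AddCircle (1 : ℝ))) : ℝ :=
  sSup {r | ∃ f : (Fin p → AddCircle (1 : ℝ)) → ℝ,
    (∀ x y, |f x - f y| ≤ torusDist x y) ∧ r = (∫ x, f x ∂μ) - ∫ x, f x ∂ν}

theorem torusDist_le {p : ℕ} (x y : Fin p → AddCircle (1 : ℝ)) :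
    torusDist x y ≤ Real.sqrt p := by
  rw [torusDist]
  apply Real.sqrt_le_sqrt
  calc ∑ i, dist (x i) (y i) ^ 2 ≤ ∑ _i : Fin p, (1:ℝ) := by
        apply Finset.sum_le_sum
        intro i _
        have h1 : dist (x i) (y i) ≤ 1 := by
          rw [dist_eq_norm]
          have := AddCircle.norm_le_half_period (p := (1:ℝ)) (x := x i - y i) one_ne_zero
          norm_num at this
          linarith
        calc dist (x i) (y i) ^ 2 ≤ 1 ^ 2 := by
              apply pow_le_pow_left₀ dist_nonneg h1
          _ = 1 := one_pow 2
    _ = (p : ℝ) := by simp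

theorem torusDist_le_mul {p : ℕ} (x y : Fin p → AddCircle (1 : ℝ)) :
    torusDist x y ≤ Real.sqrt p * dist x y := by
  rw [torusDist]
  have : ∑ i, dist (x i) (y i) ^ 2 ≤ ∑ _i : Fin p, dist x y ^ 2 := by
    apply Finset.sum_le_sum
    intro i _
    exact pow_le_pow_left₀ dist_nonneg (dist_le_pi_dist x y i) 2
  calc Real.sqrt (∑ i, dist (x i) (y i) ^ 2) ≤ Real.sqrt (∑ _i : Fin p, dist x y ^ 2) :=
        Real.sqrt_le_sqrt this
    _ = Real.sqrt ((p : ℝ) * dist x y ^ 2) := by simp [mul_comm]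
    _ = Real.sqrt p * dist x y := by
        rw [Real.sqrt_mul (by positivity), Real.sqrt_sq dist_nonneg]

/-- If `γ₀, γ₁ ∈ D_μ` coincide for all `x` outside a Borel set `E ⊂ T^p`, then
`d₁(μ∗γ₀, μ∗γ₁) ≤ √p · ∫_{E×ℝ^p} |γ₀ − γ₁| dμ dv`. -/
theorem W1_convM_le (p : ℕ) (μ : Measure (Fin p → AddCircle (1 : ℝ)))
    [IsProbabilityMeasure μ]
    (γ₀ γ₁ : (Fin p → AddCircle (1 : ℝ)) × EuclideanSpace ℝ (Fin p) → ℝ)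
    (h₀meas : Measurable γ₀) (h₀pos : ∀ z, 0 ≤ γ₀ z)
    (h₀one : ∀ᵐ x ∂μ, (∫ v, γ₀ (x, v)) = 1)
    (h₁meas : Measurable γ₁) (h₁pos : ∀ z, 0 ≤ γ₁ z)
    (h₁one : ∀ᵐ x ∂μ, (∫ v, γ₁ (x, v)) = 1)
    (E : Set (Fin p → AddCircle (1 : ℝ))) (hE : MeasurableSet E)
    (hcoincide : ∀ x ∉ E, ∀ v, γ₀ (x, v) = γ₁ (x, v)) :
    W1 (convM μ γ₀) (convM μ γ₁) ≤
      Real.sqrt p *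
        ∫ z in E ×ˢ (Set.univ : Set (EuclideanSpace ℝ (Fin p))),
          |γ₀ z - γ₁ z| ∂(μ.prod volume) := by
  set ν : Measure ((Fin p → AddCircle (1:ℝ)) × EuclideanSpace ℝ (Fin p)) :=
    μ.prod volume with hνdef
  set T : (Fin p → AddCircle (1:ℝ)) × EuclideanSpace ℝ (Fin p) → (Fin p → AddCircle (1:ℝ)) :=
    fun z => z.1 - projT z.2 with hTdef
  have hprojT : Continuous (projT (p := p)) :=
    continuous_pi fun i => (AddCircle.continuous_mk' 1).comp (EuclideanSpace.proj i).continuous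
  have hTcont : Continuous T := continuous_fst.sub (hprojT.comp continuous_snd)
  -- integrability of the densities
  have hInt : ∀ γ : (Fin p → AddCircle (1:ℝ)) × EuclideanSpace ℝ (Fin p) → ℝ,
      Measurable γ → (∀ z, 0 ≤ γ z) → (∀ᵐ x ∂μ, (∫ v, γ (x, v)) = 1) →
      Integrable γ ν := by
    intro γ hm hp hone
    rw [hνdef, integrable_prod_iff hm.aestronglyMeasurable]
    constructor
    · filter_upwards [hone] with x hx
      by_contra h
      rw [integral_undef h] at hx
      norm_num at hx
    · refine (integrable_const (1:ℝ)).congr ?_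
      filter_upwards [hone] with x hx
      have : (∫ v, ‖γ (x, v)‖) = ∫ v, γ (x, v) :=
        integral_congr_ae (Filter.Eventually.of_forall fun v => Real.norm_of_nonneg (hp _))
      rw [this, hx]
  have hint₀ := hInt γ₀ h₀meas h₀pos h₀one
  have hint₁ := hInt γ₁ h₁meas h₁pos h₁one
  -- total mass
  have hMass : ∀ γ : (Fin p → AddCircle (1:ℝ)) × EuclideanSpace ℝ (Fin p) → ℝ,
      Integrable γ ν → (∀ᵐ x ∂μ, (∫ v, γ (x, v)) = 1) → (∫ z, γ z ∂ν) = 1 := by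
    intro γ hi hone
    rw [hνdef] at hi ⊢
    rw [integral_prod _ hi, integral_congr_ae hone]
    simp
  apply Real.sSup_le
  · rintro r ⟨f, hf, rfl⟩
    -- Lipschitz / boundedness facts about f
    have hfLip : ∀ x y, |f x - f y| ≤ Real.sqrt p * dist x y :=
      fun x y => (hf x y).trans (torusDist_le_mul x y)
    have hfc : Continuous f := by
      have : LipschitzWith (Real.toNNReal (Real.sqrt p)) f := by
        apply LipschitzWith.of_dist_le_mul
        intro x y
        rw [Real.dist_eq, Real.coe_toNNReal _ (Real.sqrt_nonneg _)]
        exact hfLip x y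
      exact this.continuous
    set g : (Fin p → AddCircle (1:ℝ)) → ℝ := fun y => f y - f 0 with hgdef
    have hgc : Continuous g := hfc.sub continuous_const
    have hgb : ∀ y, |g y| ≤ Real.sqrt p := fun y => (hf y 0).trans (torusDist_le y 0)
    -- pushforward integral formula
    have hPush : ∀ γ : (Fin p → AddCircle (1:ℝ)) × EuclideanSpace ℝ (Fin p) → ℝ,
        Measurable γ → (∀ z, 0 ≤ γ z) →
        (∫ y, f y ∂(convM μ γ)) = ∫ z, f (T z) * γ z ∂ν := by
      intro γ hm hp
      rw [hνdef, convM, integral_map hTcont.measurable.aemeasurable hfc.aestronglyMeasurable]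
      have hden : (fun z => ENNReal.ofReal (γ z)) =
          fun z => (((fun z => (γ z).toNNReal) z : ℝ≥0) : ℝ≥0∞) := rfl
      rw [hden, integral_withDensity_eq_integral_smul hm.real_toNNReal]
      congr 1
      funext z
      rw [NNReal.smul_def, smul_eq_mul, Real.coe_toNNReal _ (hp z), mul_comm]
    -- integrability of products
    have hIg : ∀ γ : (Fin p → AddCircle (1:ℝ)) × EuclideanSpace ℝ (Fin p) → ℝ,
        Integrable γ ν → Integrable (fun z => g (T z) * γ z) ν := by
      intro γ hi
      exact hi.bdd_mul (hgc.comp hTcont).aestronglyMeasurable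
        (c := Real.sqrt p) (Filter.Eventually.of_forall fun z => by rw [Real.norm_eq_abs]; exact hgb _)
    -- rewrite each integral
    have key : ∀ γ : (Fin p → AddCircle (1:ℝ)) × EuclideanSpace ℝ (Fin p) → ℝ,
        Measurable γ → (∀ z, 0 ≤ γ z) → (∀ᵐ x ∂μ, (∫ v, γ (x, v)) = 1) → Integrable γ ν →
        (∫ y, f y ∂(convM μ γ)) = (∫ z, g (T z) * γ z ∂ν) + f 0 := by
      intro γ hm hp hone hi
      rw [hPush γ hm hp]
      have : (fun z => f (T z) * γ z) = fun z => g (T z) * γ z + f 0 * γ z := by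
        funext z
        rw [hgdef]
        ring
      rw [this, integral_add (hIg γ hi) (hi.const_mul (f 0)), integral_const_mul,
        hMass γ hi hone, mul_one]
    rw [key γ₀ h₀meas h₀pos h₀one hint₀, key γ₁ h₁meas h₁pos h₁one hint₁]
    have hsub : ((∫ z, g (T z) * γ₀ z ∂ν) + f 0) - ((∫ z, g (T z) * γ₁ z ∂ν) + f 0)
        = ∫ z, g (T z) * (γ₀ z - γ₁ z) ∂ν := by
      rw [add_sub_add_right_eq_sub, ← integral_sub (hIg γ₀ hint₀) (hIg γ₁ hint₁)]
      exact integral_congr_ae (Filter.Eventually.of_forall fun z => (mul_sub _ _ _).symm)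
    rw [hsub]
    have hd : Integrable (fun z => γ₀ z - γ₁ z) ν := hint₀.sub hint₁
    have step : (∫ z, g (T z) * (γ₀ z - γ₁ z) ∂ν)
        ≤ ∫ z, Real.sqrt p * |γ₀ z - γ₁ z| ∂ν := by
      apply integral_mono (hIg _ hd) (hd.abs.const_mul _)
      intro z
      calc g (T z) * (γ₀ z - γ₁ z) ≤ |g (T z) * (γ₀ z - γ₁ z)| := le_abs_self _
        _ = |g (T z)| * |γ₀ z - γ₁ z| := abs_mul _ _
        _ ≤ Real.sqrt p * |γ₀ z - γ₁ z| :=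
            mul_le_mul_of_nonneg_right (hgb _) (abs_nonneg _)
    refine step.trans ?_
    rw [integral_const_mul]
    apply mul_le_mul_of_nonneg_left _ (Real.sqrt_nonneg _)
    rw [setIntegral_eq_integral_of_forall_compl_eq_zero]
    intro z hz
    have hz1 : z.1 ∉ E := by
      intro h
      exact hz ⟨h, Set.mem_univ _⟩
    have := hcoincide z.1 hz1 z.2
    simp [this]
  · exact mul_nonneg (Real.sqrt_nonneg _)
      (setIntegral_nonneg (hE.prod MeasurableSet.univ) fun z _ => abs_nonneg _)
end
end

section
/- Let μ₀, μ₁ be probability measures on T^p, Γ a transfer plan between them with disintegration Γ = Γ_y ⊗ μ₁, and γ₀ ∈ D_{μ₀}. Define γ₁(y,v) = ∫ γ₀(x,v) dΓ_y(x). Then γ₁ ∈ D_{μ₁}. -/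
open MeasureTheory Real
open scoped ENNReal

/-- Push-forward by plans: if `Γ` is a transfer plan between probability measures
`μ₀, μ₁` on `T^p`, with disintegration `Γ = Γ_y ⊗ μ₁` with respect to the second
marginal, and `γ₀ ∈ D_{μ₀}`, then `γ₁(y,v) := ∫ γ₀(x,v) dΓ_y(x)` belongs to `D_{μ₁}`. -/
theorem pushforward_by_plans_mem_D (p : ℕ)
    (μ₀ μ₁ : Measure (Fin p → AddCircle (1 : ℝ)))
    [IsProbabilityMeasure μ₀] [IsProbabilityMeasure μ₁]
    (Γ : Measure ((Fin p → AddCircle (1 : ℝ)) × (Fin p → AddCircle (1 : ℝ))))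
    [IsProbabilityMeasure Γ]
    (hfst : Γ.map Prod.fst = μ₀) (hsnd : Γ.map Prod.snd = μ₁)
    (Γy : (Fin p → AddCircle (1 : ℝ)) → Measure (Fin p → AddCircle (1 : ℝ)))
    (hΓyprob : ∀ y, IsProbabilityMeasure (Γy y))
    (hdisint : ∀ F : (Fin p → AddCircle (1 : ℝ)) × (Fin p → AddCircle (1 : ℝ)) → ℝ,
      Measurable F → (∃ M, ∀ z, |F z| ≤ M) →
      (∫ z, F z ∂Γ) = ∫ y, (∫ x, F (x, y) ∂(Γy y)) ∂μ₁)
    (γ₀ : (Fin p → AddCircle (1 : ℝ)) × EuclideanSpace ℝ (Fin p) → ℝ)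
    (hmeas : Measurable γ₀) (hpos : ∀ z, 0 ≤ γ₀ z)
    (hone : ∀ᵐ x ∂μ₀, (∫ v, γ₀ (x, v)) = 1) :
    (∀ y v, 0 ≤ ∫ x, γ₀ (x, v) ∂(Γy y)) ∧
    (∀ᵐ y ∂μ₁, (∫ v, (∫ x, γ₀ (x, v) ∂(Γy y))) = 1) := by
  classical
  constructor
  · exact fun y v => integral_nonneg fun x => hpos _
  have hγmeas : Measurable fun z : (Fin p → AddCircle (1 : ℝ)) × EuclideanSpace ℝ (Fin p) => ENNReal.ofReal (γ₀ z) :=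
    ENNReal.measurable_ofReal.comp hmeas
  set h : (Fin p → AddCircle (1 : ℝ)) → ℝ≥0∞ := fun x => ∫⁻ v, ENNReal.ofReal (γ₀ (x, v)) with hhdef
  have hmeash : Measurable h := hγmeas.lintegral_prod_right'
  have h_ae : ∀ᵐ x ∂μ₀, h x = 1 := by
    filter_upwards [hone] with x hx
    by_cases hi : Integrable fun v => γ₀ (x, v)
    · have h2 := MeasureTheory.ofReal_integral_eq_lintegral_ofReal hi
        (Filter.Eventually.of_forall fun v => hpos _)
      rw [hx] at h2
      simpa [hhdef] using h2.symm
    · rw [integral_undef hi] at hx; norm_num at hx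
  set N : Set (Fin p → AddCircle (1 : ℝ)) := {x | ¬ h x = 1} with hNdef
  have hNmeas : MeasurableSet N := (hmeash (measurableSet_singleton 1)).compl
  have hNnull : μ₀ N = 0 := ae_iff.mp h_ae
  -- F = 1 - indicator of N in first coordinate
  set F : (Fin p → AddCircle (1 : ℝ)) × (Fin p → AddCircle (1 : ℝ)) → ℝ := fun z => 1 - N.indicator (fun _ => (1 : ℝ)) z.1 with hFdef
  have hIndMeas : Measurable fun x : Fin p → AddCircle (1 : ℝ) => N.indicator (fun _ => (1 : ℝ)) x :=
    measurable_const.indicator hNmeas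
  have hFmeas : Measurable F :=
    measurable_const.sub (hIndMeas.comp measurable_fst)
  have hFbd : ∃ M, ∀ z, |F z| ≤ M := by
    refine ⟨1, fun z => ?_⟩
    simp only [hFdef, Set.indicator]
    split <;> simp
  have hIndIntΓ : Integrable (fun z : (Fin p → AddCircle (1 : ℝ)) × (Fin p → AddCircle (1 : ℝ)) => N.indicator (fun _ => (1 : ℝ)) z.1) Γ := by
    refine (integrable_const (1 : ℝ)).mono'
      (hIndMeas.comp measurable_fst).aestronglyMeasurable ?_
    refine Filter.Eventually.of_forall fun z => ?_
    simp only [Set.indicator]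
    split <;> simp
  have hFint : (∫ z, F z ∂Γ) = 1 := by
    have hind : (∫ z, N.indicator (fun _ => (1 : ℝ)) z.1 ∂Γ) = 0 := by
      rw [← integral_map measurable_fst.aemeasurable hIndMeas.aestronglyMeasurable, hfst,
        integral_indicator_const _ hNmeas]
      simp [hNnull, measureReal_def]
    rw [hFdef]
    rw [integral_sub (integrable_const 1) hIndIntΓ, hind, integral_const]
    simp
  have key := hdisint F hFmeas hFbd
  rw [hFint] at key
  have hinner : ∀ y, (∫ x, F (x, y) ∂(Γy y)) = 1 - ((Γy y) N).toReal := by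
    intro y
    haveI := hΓyprob y
    have hIndInt : Integrable (fun x : Fin p → AddCircle (1 : ℝ) => N.indicator (fun _ => (1 : ℝ)) x) (Γy y) := by
      refine (integrable_const (1 : ℝ)).mono' hIndMeas.aestronglyMeasurable ?_
      refine Filter.Eventually.of_forall fun z => ?_
      simp only [Set.indicator]
      split <;> simp
    simp only [hFdef]
    rw [integral_sub (integrable_const 1) hIndInt, integral_indicator_const _ hNmeas,
      integral_const]
    simp [measureReal_def]
  set u' : (Fin p → AddCircle (1 : ℝ)) → ℝ := fun y => ∫ x, F (x, y) ∂(Γy y) with hu'def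
  have hu'int : Integrable u' μ₁ := by
    by_contra hc
    rw [integral_undef hc] at key; norm_num at key
  have hueq : (fun y => ((Γy y) N).toReal) = fun y => 1 - u' y := by
    funext y; rw [hu'def]; simp only; rw [hinner y]; ring
  have huint : Integrable (fun y => ((Γy y) N).toReal) μ₁ := by
    rw [hueq]; exact (integrable_const 1).sub hu'int
  have husum : (∫ y, ((Γy y) N).toReal ∂μ₁) = 0 := by
    rw [hueq, integral_sub (integrable_const 1) hu'int, ← key, integral_const]
    simp
  have hae0 : ∀ᵐ y ∂μ₁, ((Γy y) N).toReal = 0 := by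
    have h0 := (integral_eq_zero_iff_of_nonneg
      (fun y => ENNReal.toReal_nonneg) huint).mp husum
    filter_upwards [h0] with y hy using hy
  filter_upwards [hae0] with y hy
  haveI := hΓyprob y
  have hΓyN : (Γy y) N = 0 := by
    rcases (ENNReal.toReal_eq_zero_iff _).mp hy with h0 | htop
    · exact h0
    · exact absurd htop (measure_ne_top _ _)
  have hhh : ∀ᵐ x ∂(Γy y), h x = 1 := by
    rw [ae_iff]; exact hΓyN
  have hswap : (∫⁻ v, ∫⁻ x, ENNReal.ofReal (γ₀ (x, v)) ∂(Γy y)) = 1 := by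
    have hsw := lintegral_lintegral_swap (μ := (volume : Measure (EuclideanSpace ℝ (Fin p)))) (ν := Γy y)
      (f := fun v x => ENNReal.ofReal (γ₀ (x, v)))
      ((hγmeas.comp measurable_swap).aemeasurable)
    rw [hsw]
    calc ∫⁻ x, ∫⁻ v, ENNReal.ofReal (γ₀ (x, v)) ∂volume ∂(Γy y)
        = ∫⁻ _x, (1 : ℝ≥0∞) ∂(Γy y) := by
          refine lintegral_congr_ae ?_
          filter_upwards [hhh] with x hx using hx
      _ = 1 := by simp
  set k : EuclideanSpace ℝ (Fin p) → ℝ≥0∞ := fun v => ∫⁻ x, ENNReal.ofReal (γ₀ (x, v)) ∂(Γy y) with hkdef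
  have hkmeas : Measurable k := (hγmeas.comp measurable_swap).lintegral_prod_right'
  have hklt : ∀ᵐ v : EuclideanSpace ℝ (Fin p), k v < ⊤ := by
    refine ae_lt_top hkmeas ?_
    rw [show (∫⁻ v, k v) = 1 from hswap]
    exact ENNReal.one_ne_top
  have hg₁meas : AEStronglyMeasurable (fun v : EuclideanSpace ℝ (Fin p) => ∫ x, γ₀ (x, v) ∂(Γy y)) volume :=
    ((hmeas.comp measurable_swap).stronglyMeasurable.integral_prod_right').aestronglyMeasurable
  have haeq : ∀ᵐ v : EuclideanSpace ℝ (Fin p), ENNReal.ofReal (∫ x, γ₀ (x, v) ∂(Γy y)) = k v := by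
    filter_upwards [hklt] with v hv
    have hintx : Integrable (fun x => γ₀ (x, v)) (Γy y) := by
      refine ⟨(hmeas.comp (measurable_id.prodMk measurable_const)).aestronglyMeasurable, ?_⟩
      rw [hasFiniteIntegral_iff_ofReal (Filter.Eventually.of_forall fun x => hpos _)]
      exact hv
    rw [MeasureTheory.ofReal_integral_eq_lintegral_ofReal hintx
      (Filter.Eventually.of_forall fun x => hpos _)]
  rw [integral_eq_lintegral_of_nonneg_ae
    (Filter.Eventually.of_forall fun v => integral_nonneg fun x => hpos _) hg₁meas,
    lintegral_congr_ae haeq, hswap]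
  simp
end

section
/- Suppose a minimizing density γ ∈ D_μ for (G^h_t U)(μ) satisfies γ(x,v) ≤ C for μ⊗Lebesgue-a.e. (x,v) with x restricted to T^p, and γ(x,v) ≥ 1/C for a.e. (x,v) ∈ T^p × B(0, 2√p). Then the measure μ∗γ has a density ρ with respect to Lebesgue measure on T^p satisfying ρ(z) ≥ Vol(Q)/C = 1/C for a.e. z, where Q = [−1/2, 1/2)^p; in particular ‖1/ρ‖_{L^∞} ≤ C. -/
open MeasureTheory Real
open scoped ENNReal

noncomputable section

namespace ConvMAux

open Set

/-- The componentwise projection `(Fin p → ℝ) → T^p`. -/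
def Fm {p : ℕ} (x : Fin p → ℝ) : Fin p → AddCircle (1 : ℝ) := fun i => (x i : AddCircle (1:ℝ))

def box (p : ℕ) : Set (Fin p → ℝ) := Set.pi univ fun _ => Ioc (-(1/2) : ℝ) (1/2)

lemma box_meas (p : ℕ) : MeasurableSet (box p) :=
  MeasurableSet.univ_pi fun _ => measurableSet_Ioc

lemma Fm_measurable (p : ℕ) : Measurable (Fm (p := p)) :=
  measurable_pi_iff.mpr fun i => (AddCircle.measurable_mk' (a := 1)).comp (measurable_pi_apply i)

instance negInvVol (p : ℕ) :
    Measure.IsNegInvariant (volume : Measure (Fin p → AddCircle (1:ℝ))) :=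
  Measure.pi.isNegInvariant (μ := fun _ : Fin p => (volume : Measure (AddCircle (1:ℝ))))

lemma vol_sub_preimage {p : ℕ} (x : Fin p → AddCircle (1:ℝ))
    {s : Set (Fin p → AddCircle (1:ℝ))} (hs : MeasurableSet s) :
    volume ((fun t => x - t) ⁻¹' s) = volume s :=
  (Measure.measurePreserving_sub_left
    (volume : Measure (Fin p → AddCircle (1:ℝ))) x).measure_preimage hs.nullMeasurableSet

lemma restrict_box (p : ℕ) :
    (volume : Measure (Fin p → ℝ)).restrict (box p)
      = Measure.pi fun _ : Fin p => volume.restrict (Ioc (-(1/2) : ℝ) (1/2)) := by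
  refine (Measure.pi_eq fun s hs => ?_).symm
  rw [Measure.restrict_apply (MeasurableSet.univ_pi hs)]
  have : (Set.pi univ s) ∩ box p = Set.pi univ (fun i => s i ∩ Ioc (-(1/2):ℝ) (1/2)) := by
    ext x; simp [box, Set.mem_pi, forall_and]
  rw [this, MeasureTheory.volume_pi, Measure.pi_pi]
  simp [Measure.restrict_apply (hs _)]

lemma Fm_measurePreserving (p : ℕ) :
    MeasurePreserving (Fm (p := p)) (volume.restrict (box p)) volume := by
  haveI : Fact ((0:ℝ) < 1) := ⟨zero_lt_one⟩
  rw [restrict_box]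
  have h1 : MeasurePreserving (fun t : ℝ => (t : AddCircle (1:ℝ)))
      (volume.restrict (Ioc (-(1/2) : ℝ) (1/2))) volume := by
    have := AddCircle.measurePreserving_mk (1:ℝ) (-(1/2))
    norm_num at this ⊢
    convert this using 2
  exact MeasureTheory.measurePreserving_pi _ _ fun _ => h1

lemma vol_box_inter {p : ℕ} {s : Set (Fin p → AddCircle (1:ℝ))} (hs : MeasurableSet s) :
    volume (Fm ⁻¹' s ∩ box p) = volume s := by
  have := (Fm_measurePreserving p).measure_preimage hs.nullMeasurableSet
  rwa [Measure.restrict_apply (Fm_measurable p hs)] at this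

lemma Fm_add_int {p : ℕ} (x : Fin p → ℝ) (n : Fin p → ℤ) :
    Fm (fun i => (n i : ℝ) + x i) = Fm x := by
  funext i
  show (((n i : ℝ) + x i : ℝ) : AddCircle (1:ℝ)) = _
  have : ((n i : ℝ) : AddCircle (1:ℝ)) = 0 := by
    have : ((n i : ℝ) : AddCircle (1:ℝ)) = (n i) • ((1:ℝ) : AddCircle (1:ℝ)) := by
      push_cast [← QuotientAddGroup.mk_zsmul]
      norm_num
    rw [this, AddCircle.coe_period, smul_zero]
  rw [AddCircle.coe_add, this, zero_add]
  rfl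

lemma vol_preimage_null {p : ℕ} {s : Set (Fin p → AddCircle (1:ℝ))} (hs : MeasurableSet s)
    (h0 : volume s = 0) : volume (Fm (p := p) ⁻¹' s) = 0 := by
  have cover : Fm (p := p) ⁻¹' s ⊆
      ⋃ n : Fin p → ℤ, ((fun y i => (n i : ℝ) + y i) ⁻¹' (Fm ⁻¹' s ∩ box p)) := by
    intro x hx
    refine Set.mem_iUnion.2 ⟨fun i => -⌈x i - 1/2⌉, ?_, ?_⟩
    · show Fm _ ∈ s
      rwa [Fm_add_int]
    · intro i _
      have h1 := Int.ceil_lt_add_one (x i - 1/2)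
      have h2 := Int.le_ceil (x i - 1/2)
      constructor
      · push_cast; linarith
      · push_cast; linarith
  refine le_antisymm (le_trans (measure_mono cover) (le_trans (measure_iUnion_le _) ?_)) zero_le
  have hz : ∀ n : Fin p → ℤ,
      volume ((fun (y : Fin p → ℝ) i => (n i : ℝ) + y i) ⁻¹' (Fm (p := p) ⁻¹' s ∩ box p)) = 0 := by
    intro n
    have he : (fun (y : Fin p → ℝ) i => (n i : ℝ) + y i) = (fun y => (fun i => (n i : ℝ)) + y) := by
      funext y; rfl
    rw [he, measure_preimage_add, vol_box_inter hs, h0]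
  simp only [hz, tsum_zero, le_refl]

lemma projT_eq {p : ℕ} (v : EuclideanSpace ℝ (Fin p)) :
    projT v = Fm ((MeasurableEquiv.toLp 2 (Fin p → ℝ)).symm v) := rfl

lemma e_mp (p : ℕ) : MeasurePreserving ((MeasurableEquiv.toLp 2 (Fin p → ℝ)).symm) volume volume :=
  EuclideanSpace.volume_preserving_symm_measurableEquiv_toLp (Fin p)

def boxE (p : ℕ) : Set (EuclideanSpace ℝ (Fin p)) :=
  ((MeasurableEquiv.toLp 2 (Fin p → ℝ)).symm) ⁻¹' (box p)

lemma boxE_meas (p : ℕ) : MeasurableSet (boxE p) :=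
  ((MeasurableEquiv.toLp 2 (Fin p → ℝ)).symm).measurable (box_meas p)

lemma projT_measurable (p : ℕ) : Measurable (projT (p := p)) :=
  (Fm_measurable p).comp ((MeasurableEquiv.toLp 2 (Fin p → ℝ)).symm).measurable

lemma boxE_subset_ball {p : ℕ} (hp : 1 ≤ p) :
    boxE p ⊆ Metric.ball (0 : EuclideanSpace ℝ (Fin p)) (2 * Real.sqrt p) := by
  intro v hv
  have habs : ∀ i, |v i| ≤ 1/2 := by
    intro i
    have := hv i (mem_univ i)
    rw [abs_le]; exact ⟨le_of_lt this.1, this.2⟩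
  have hnorm : ‖v‖ ≤ Real.sqrt p / 2 := by
    rw [EuclideanSpace.norm_eq]
    have : ∑ i, ‖v i‖^2 ≤ (p : ℝ) * (1/2)^2 := by
      calc ∑ i, ‖v i‖^2 ≤ ∑ _i : Fin p, (1/2:ℝ)^2 := by
            apply Finset.sum_le_sum
            intro i _
            have := habs i
            rw [Real.norm_eq_abs]
            nlinarith [abs_nonneg (v i)]
        _ = (p : ℝ) * (1/2)^2 := by simp [Finset.sum_const, mul_comm]
    calc Real.sqrt (∑ i, ‖v i‖^2) ≤ Real.sqrt ((p:ℝ) * (1/2)^2) := Real.sqrt_le_sqrt this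
      _ = Real.sqrt p / 2 := by
          rw [Real.sqrt_mul (Nat.cast_nonneg p), show ((1/2:ℝ))^2 = (1/2)*(1/2) by ring,
            Real.sqrt_mul_self (by norm_num : (0:ℝ) ≤ 1/2)]
          ring
  rw [Metric.mem_ball, dist_zero_right]
  have hsp : 0 < Real.sqrt p := Real.sqrt_pos.2 (by exact_mod_cast hp)
  calc ‖v‖ ≤ Real.sqrt p / 2 := hnorm
    _ < 2 * Real.sqrt p := by linarith

lemma vol_T_univ (p : ℕ) : volume (univ : Set (Fin p → AddCircle (1:ℝ))) = 1 := by
  rw [MeasureTheory.volume_pi, Measure.pi_univ]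
  simp [AddCircle.measure_univ]

lemma vol_E_univ_zero : (volume : Measure (EuclideanSpace ℝ (Fin 0))) Set.univ = 1 := by
  have := (e_mp 0).measure_preimage (MeasurableSet.univ.nullMeasurableSet)
  simpa [Measure.pi_univ, MeasureTheory.volume_pi] using this

end ConvMAux

open ConvMAux Set

/-- If `γ ∈ D_μ` satisfies `γ ≤ C` a.e. and `γ ≥ 1/C` a.e. on `T^p × B(0, 2√p)`, then
`μ∗γ` has a density `ρ` with respect to Lebesgue measure on `T^p` with `ρ ≥ 1/C` a.e.;
in particular `‖1/ρ‖_∞ ≤ C`. -/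
theorem convM_density_lower_bound (p : ℕ) (C : ℝ) (hC : 0 < C)
    (μ : Measure (Fin p → AddCircle (1 : ℝ))) [IsProbabilityMeasure μ]
    (γ : (Fin p → AddCircle (1 : ℝ)) × EuclideanSpace ℝ (Fin p) → ℝ)
    (hmeas : Measurable γ) (hpos : ∀ z, 0 ≤ γ z)
    (hone : ∀ᵐ x ∂μ, (∫ v, γ (x, v)) = 1)
    (hupper : ∀ᵐ z ∂(μ.prod volume), γ z ≤ C)
    (hlower : ∀ᵐ z ∂(μ.prod volume),
      z.2 ∈ Metric.ball (0 : EuclideanSpace ℝ (Fin p)) (2 * Real.sqrt p) → 1 / C ≤ γ z) :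
    ∃ ρ : (Fin p → AddCircle (1 : ℝ)) → ℝ≥0∞,
      convM μ γ = (volume : Measure (Fin p → AddCircle (1 : ℝ))).withDensity ρ ∧
      ∀ᵐ z ∂(volume : Measure (Fin p → AddCircle (1 : ℝ))), ENNReal.ofReal (1 / C) ≤ ρ z := by
  classical
  let α := Fin p → AddCircle (1 : ℝ)
  let E := EuclideanSpace ℝ (Fin p)
  set g : (Fin p → AddCircle (1 : ℝ)) × EuclideanSpace ℝ (Fin p) → ℝ≥0∞ :=
    fun z => ENNReal.ofReal (γ z) with hg
  have hgmeas : Measurable g := hmeas.ennreal_ofReal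
  set T : (Fin p → AddCircle (1 : ℝ)) × EuclideanSpace ℝ (Fin p) → (Fin p → AddCircle (1 : ℝ)) :=
    fun z => z.1 - projT z.2 with hTdef
  have hT : Measurable T := by
    apply Measurable.sub measurable_fst ((projT_measurable p).comp measurable_snd)
  -- the basic formula for `convM μ γ s`
  have νapply : ∀ s : Set (Fin p → AddCircle (1 : ℝ)), MeasurableSet s →
      convM μ γ s = ∫⁻ x, ∫⁻ v, (T ⁻¹' s).indicator g (x, v) ∂volume ∂μ := by
    intro s hs
    rw [convM, Measure.map_apply hT hs, withDensity_apply _ (hT hs),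
      ← lintegral_indicator (hT hs), MeasureTheory.lintegral_prod _
        (hgmeas.indicator (hT hs)).aemeasurable]
  -- inner indicator rewrite
  have indicator_eq : ∀ (x : (Fin p → AddCircle (1 : ℝ))) (s : Set (Fin p → AddCircle (1 : ℝ))),
      (fun v => (T ⁻¹' s).indicator g (x, v))
        = (projT ⁻¹' ((fun w => x - w) ⁻¹' s)).indicator (fun v => g (x, v)) := by
    intro x s
    funext v
    by_cases h : x - projT v ∈ s
    · rw [Set.indicator_of_mem (by exact h) g, Set.indicator_of_mem (by exact h)]
    · rw [Set.indicator_of_notMem (by exact h) g, Set.indicator_of_notMem (by exact h)]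
  -- total mass is 1
  have hmass : convM μ γ univ = 1 := by
    rw [νapply univ MeasurableSet.univ]
    have : ∀ᵐ x ∂μ, (∫⁻ v, (T ⁻¹' univ).indicator g (x, v) ∂volume) = 1 := by
      filter_upwards [hone] with x hx1
      have hint : Integrable (fun v => γ (x, v)) volume := by
        by_contra h
        rw [integral_undef h] at hx1
        exact one_ne_zero hx1.symm
      have : (∫⁻ v, g (x, v) ∂volume) = ENNReal.ofReal (∫ v, γ (x, v)) :=
        (MeasureTheory.ofReal_integral_eq_lintegral_ofReal hint
          (Filter.Eventually.of_forall fun v => hpos _)).symm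
      simp only [Set.preimage_univ, Set.indicator_univ]
      rw [this, hx1, ENNReal.ofReal_one]
    rw [lintegral_congr_ae this, lintegral_one, measure_univ]
  -- absolute continuity
  have hac : convM μ γ ≪ (volume : Measure (Fin p → AddCircle (1 : ℝ))) := by
    intro s hs0
    obtain ⟨t, hts, htm, ht0⟩ := exists_measurable_superset_of_null hs0
    refine measure_mono_null hts ?_
    rw [convM, Measure.map_apply hT htm]
    rw [withDensity_apply _ (hT htm)]
    refine setLIntegral_measure_zero _ _ ?_
    rw [Measure.prod_apply (hT htm)]
    have : ∀ x : (Fin p → AddCircle (1 : ℝ)), (volume : Measure (EuclideanSpace ℝ (Fin p))) (Prod.mk x ⁻¹' (T ⁻¹' t)) = 0 := by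
      intro x
      have hpre : Prod.mk x ⁻¹' (T ⁻¹' t)
          = ((MeasurableEquiv.toLp 2 (Fin p → ℝ)).symm) ⁻¹' (Fm ⁻¹' ((fun w => x - w) ⁻¹' t)) := rfl
      have hsx : MeasurableSet ((fun w => x - w) ⁻¹' t) :=
        (measurable_const.sub measurable_id) htm
      have hsx0 : volume ((fun w => x - w) ⁻¹' t) = 0 := by
        rw [vol_sub_preimage x htm]; exact ht0
      rw [hpre, (e_mp p).measure_preimage ((Fm_measurable p hsx).nullMeasurableSet)]
      exact vol_preimage_null hsx hsx0
    simp [this]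
  -- key lower bound
  have key : ∀ s : Set (Fin p → AddCircle (1 : ℝ)), MeasurableSet s →
      ENNReal.ofReal (1 / C) * volume s ≤ convM μ γ s := by
    rcases Nat.eq_zero_or_pos p with hp0 | hp1
    · -- p = 0 : derive `1 ≤ C` and use subsingleton structure
      subst hp0
      haveI hsubE : Subsingleton (EuclideanSpace ℝ (Fin 0)) :=
        ⟨fun a b => PiLp.ext fun i => isEmptyElim i⟩
      haveI hsubA : Subsingleton (Fin 0 → AddCircle (1:ℝ)) :=
        ⟨fun a b => funext fun i => isEmptyElim i⟩
      haveI hEfin : IsFiniteMeasure (volume : Measure (EuclideanSpace ℝ (Fin 0))) :=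
        ⟨by rw [vol_E_univ_zero]; exact ENNReal.one_lt_top⟩
      have hCge : (1 : ℝ) ≤ C := by
        have h2 := Measure.ae_ae_of_ae_prod hupper
        haveI hne : (ae μ).NeBot := ae_neBot.mpr (IsProbabilityMeasure.ne_zero μ)
        obtain ⟨x, hx1, hx2⟩ := (hone.and h2).exists
        have hint : Integrable (fun v => γ (x, v)) volume := by
          by_contra h
          rw [integral_undef h] at hx1
          exact one_ne_zero hx1.symm
        have := integral_mono_ae hint (integrable_const C) hx2
        rw [hx1] at this
        calc (1:ℝ) ≤ ∫ _v : EuclideanSpace ℝ (Fin 0), C ∂volume := this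
          _ = C := by rw [integral_const, measureReal_def, vol_E_univ_zero]; simp
      intro s _hs
      rcases Set.eq_empty_or_nonempty s with rfl | hne
      · simp
      · have hsu : s = univ := by
          obtain ⟨z, hz⟩ := hne
          refine Set.eq_univ_of_forall fun y => ?_
          rwa [Subsingleton.elim y z]
        rw [hsu, hmass, vol_T_univ, mul_one]
        exact ENNReal.ofReal_le_one.mpr (by rw [div_le_one hC]; exact hCge)
    · -- p ≥ 1 : the main computation
      intro s hs
      rw [νapply s hs]
      have hball := Measure.ae_ae_of_ae_prod hlower
      have pointwise : ∀ᵐ x ∂μ,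
          ENNReal.ofReal (1 / C) * volume s
            ≤ ∫⁻ v, (T ⁻¹' s).indicator g (x, v) ∂volume := by
        filter_upwards [hball] with x hx
        set sx : Set (Fin p → AddCircle (1 : ℝ)) := (fun w => x - w) ⁻¹' s with hsxdef
        have hsxm : MeasurableSet sx := (measurable_const.sub measurable_id) hs
        have hsxvol : volume sx = volume s := vol_sub_preimage x hs
        have hAm : MeasurableSet (projT ⁻¹' sx) := projT_measurable p hsxm
        rw [indicator_eq x s]
        calc ENNReal.ofReal (1 / C) * volume s
            = ENNReal.ofReal (1 / C) * volume (projT ⁻¹' sx ∩ boxE p) := by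
              congr 1
              have hpre : projT ⁻¹' sx ∩ boxE p
                  = ((MeasurableEquiv.toLp 2 (Fin p → ℝ)).symm) ⁻¹' (Fm ⁻¹' sx ∩ box p) := rfl
              rw [hpre, (e_mp p).measure_preimage
                ((Fm_measurable p hsxm).inter (box_meas p)).nullMeasurableSet,
                vol_box_inter hsxm, hsxvol]
          _ = ∫⁻ v in boxE p, (projT ⁻¹' sx).indicator (fun _ => ENNReal.ofReal (1 / C)) v
                ∂volume := by
              rw [lintegral_indicator_const hAm, Measure.restrict_apply hAm]
          _ ≤ ∫⁻ v in boxE p, (projT ⁻¹' sx).indicator (fun v => g (x, v)) v ∂volume := by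
              refine lintegral_mono_ae ?_
              rw [ae_restrict_iff' (boxE_meas p)]
              filter_upwards [hx] with v hv hvbox
              by_cases hmem : v ∈ projT ⁻¹' sx
              · rw [Set.indicator_of_mem hmem, Set.indicator_of_mem hmem]
                exact ENNReal.ofReal_le_ofReal (hv (boxE_subset_ball hp1 hvbox))
              · rw [Set.indicator_of_notMem hmem, Set.indicator_of_notMem hmem]
          _ ≤ ∫⁻ v, (projT ⁻¹' sx).indicator (fun v => g (x, v)) v ∂volume :=
              setLIntegral_le_lintegral _ _
      calc ENNReal.ofReal (1 / C) * volume s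
          = ∫⁻ _x, ENNReal.ofReal (1 / C) * volume s ∂μ := by
            rw [lintegral_const, measure_univ, mul_one]
        _ ≤ ∫⁻ x, ∫⁻ v, (T ⁻¹' s).indicator g (x, v) ∂volume ∂μ := lintegral_mono_ae pointwise
  -- assemble
  haveI : IsFiniteMeasure (convM μ γ) := ⟨by rw [hmass]; exact ENNReal.one_lt_top⟩
  haveI : IsFiniteMeasure (volume : Measure (Fin p → AddCircle (1 : ℝ))) := ⟨by rw [vol_T_univ]; exact ENNReal.one_lt_top⟩
  refine ⟨(convM μ γ).rnDeriv volume, (Measure.withDensity_rnDeriv_eq _ _ hac).symm, ?_⟩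
  refine ae_le_of_forall_setLIntegral_le_of_sigmaFinite₀ aemeasurable_const ?_
  intro s hs _
  rw [setLIntegral_const]
  calc ENNReal.ofReal (1 / C) * volume s ≤ convM μ γ s := key s hs
    _ = ∫⁻ x in s, (convM μ γ).rnDeriv volume x ∂volume := by
        conv_lhs => rw [← Measure.withDensity_rnDeriv_eq _ _ hac]
        rw [withDensity_apply _ hs]
end
end
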